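/- arXiv:2111.08160 — 2 statements merged into one kernel-verified Lean document; each statement's English description precedes it below -/
import Mathlib

section
/- Let g : U → ℝ be a real analytic function on an open connected set U ⊆ ℝᵐ. If g is not identically zero on U, then the zero set {x ∈ U : g(x) = 0} has Lebesgue measure zero. -/
open MeasureTheory

/-- A set of reals all of whose points are isolated (in the set) is countable. -/
lemma countable_of_isolated_pts {s : Set ℝ}
    (h : ∀ z ∈ s, ∃ r > 0, ∀ w ∈ s, dist w z < r → w = z) : s.Countable := by
  choose! r hr hsep using h
  have hdisj : s.PairwiseDisjoint (fun z => Metric.ball z (r z / 2)) := by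
    intro z hz w hw hzw
    have h1 : r z ≤ dist w z := by
      by_contra hlt
      exact hzw (by rw [hsep z hz w hw (lt_of_not_ge hlt)])
    have h2 : r w ≤ dist z w := by
      by_contra hlt
      exact hzw (hsep w hw z hz (lt_of_not_ge hlt))
    have : r z / 2 + r w / 2 ≤ dist z w := by
      rw [dist_comm] at h1; linarith
    exact Metric.ball_disjoint_ball this
  exact hdisj.countable_of_isOpen (fun z _ => Metric.isOpen_ball)
    (fun z hz => ⟨z, Metric.mem_ball_self (by linarith [hr z hz])⟩)

/-- The zero set of a 1D analytic function, not identically zero on a preconnected open set,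
is countable. -/
lemma zero_set_countable_1d {J : Set ℝ} {h : ℝ → ℝ} (hJo : IsOpen J)
    (hJc : IsPreconnected J) (hh : AnalyticOnNhd ℝ h J) {t₂ : ℝ} (ht₂ : t₂ ∈ J)
    (hne : h t₂ ≠ 0) : {t ∈ J | h t = 0}.Countable := by
  apply countable_of_isolated_pts
  rintro z ⟨hzJ, hz0⟩
  rcases (hh z hzJ).eventually_eq_zero_or_eventually_ne_zero with hev | hev
  · exact absurd (hh.eqOn_zero_of_preconnected_of_eventuallyEq_zero hJc hzJ hev ht₂) hne
  · rw [eventually_nhdsWithin_iff] at hev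
    rw [Metric.eventually_nhds_iff] at hev
    obtain ⟨ρ, hρ, hball⟩ := hev
    refine ⟨ρ, hρ, ?_⟩
    rintro w ⟨hwJ, hw0⟩ hdist
    by_contra hwz
    exact hball hdist (by simpa using hwz) hw0

theorem analytic_zero_set_measure_zero {m : ℕ} {U : Set (EuclideanSpace ℝ (Fin m))}
    (hU : IsOpen U) (hc : IsConnected U) {g : EuclideanSpace ℝ (Fin m) → ℝ}
    (hg : AnalyticOn ℝ g U) (hne : ∃ x ∈ U, g x ≠ 0) :
    volume {x ∈ U | g x = 0} = 0 := by
  obtain ⟨x₀, hx₀U, hgx₀⟩ := hne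
  cases m with
  | zero =>
    have hempty : {x ∈ U | g x = 0} = ∅ := by
      ext x
      simp only [Set.mem_setOf_eq, Set.mem_empty_iff_false, iff_false, not_and]
      intro hxU
      have hx : x = x₀ := by ext i; exact i.elim0
      rw [hx]; exact hgx₀
    rw [hempty, measure_empty]
  | succ n =>
    have hgn : AnalyticOnNhd ℝ g U := (hU.analyticOn_iff_analyticOnNhd).mp hg
    have hnotloc : ∀ x ∈ U, ¬ (∀ᶠ z in nhds x, g z = 0) := by
      intro x hx hev
      exact hgx₀ (hgn.eqOn_zero_of_preconnected_of_eventuallyEq_zero hc.isPreconnected hx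
        hev hx₀U)
    set Z : Set (EuclideanSpace ℝ (Fin (n + 1))) := {x ∈ U | g x = 0} with hZdef
    have hZmeas : MeasurableSet Z := by
      have ho : IsOpen (U ∩ g ⁻¹' ({0}ᶜ)) :=
        (hgn.continuousOn).isOpen_inter_preimage hU isOpen_compl_singleton
      have : Z = U \ (U ∩ g ⁻¹' ({0}ᶜ)) := by
        ext z
        simp only [hZdef, Set.mem_setOf_eq, Set.mem_diff, Set.mem_inter_iff, Set.mem_preimage,
          Set.mem_compl_iff, Set.mem_singleton_iff]
        tauto
      rw [this]
      exact hU.measurableSet.diff ho.measurableSet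
    apply measure_null_of_locally_null
    rintro x ⟨hxU, hgx⟩
    -- geometric setup
    obtain ⟨r, hr, hballU⟩ := Metric.isOpen_iff.mp hU x hxU
    set ε := r / 3 with hεdef
    have hε : 0 < ε := by positivity
    have hball3 : Metric.ball x (3 * ε) ⊆ U := by
      rw [hεdef]; intro z hz; apply hballU; rw [Metric.mem_ball] at hz ⊢; linarith
    -- find y close to x with g y ≠ 0
    have hfreq : ∃ᶠ z in nhds x, g z ≠ 0 := by
      have := hnotloc x hxU
      rwa [Filter.not_eventually] at this
    obtain ⟨y, hgy, hyball⟩ :=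
      (hfreq.and_eventually (Metric.ball_mem_nhds x hε)).exists
    have hyU : y ∈ U := hball3 (Metric.mem_ball.mpr (by linarith [Metric.mem_ball.mp hyball]))
    have hyne : y ≠ x := fun hyx => hgy (by rw [hyx]; exact hgx)
    set c := dist y x with hcdef
    have hc : 0 < c := dist_pos.mpr hyne
    have hcε : c < ε := Metric.mem_ball.mp hyball
    have hvne : y - x ≠ 0 := sub_ne_zero.mpr hyne
    set u := ‖y - x‖⁻¹ • (y - x) with hudef
    have hu : ‖u‖ = 1 := norm_smul_inv_norm hvne
    have hcu : x + c • u = y := by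
      rw [hudef, hcdef, dist_eq_norm, smul_smul, mul_inv_cancel₀ (norm_ne_zero_iff.mpr hvne),
        one_smul]
      abel
    -- continuity of g at y : g nonzero on a ball around y
    have hconty : ContinuousAt g y := (hgn y hyU).continuousAt
    have hevy : ∀ᶠ z in nhds y, g z ≠ 0 := hconty.eventually_ne hgy
    rw [Metric.eventually_nhds_iff] at hevy
    obtain ⟨η, hη, hηball⟩ := hevy
    set δ := min η ε with hδdef
    have hδ : 0 < δ := lt_min hη hε
    have hδη : δ ≤ η := min_le_left _ _
    have hδε : δ ≤ ε := min_le_right _ _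
    -- orthonormal basis with b 0 = u
    have hcard : Module.finrank ℝ (EuclideanSpace ℝ (Fin (n + 1))) = Fintype.card (Fin (n + 1)) := by
      simp [finrank_euclideanSpace]
    have horth : Orthonormal ℝ (Set.restrict ({0} : Set (Fin (n + 1))) (fun _ => u)) := by
      constructor
      · intro i; exact hu
      · intro i j hij
        exact absurd (Subtype.ext (by
          have hi := i.2; have hj := j.2
          simp only [Set.mem_singleton_iff] at hi hj
          rw [hi, hj])) hij
    obtain ⟨b, hb⟩ := horth.exists_orthonormalBasis_extension_of_card_eq hcard
    have hb0 : b 0 = u := hb 0 rfl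
    -- the measure preserving parametrization
    set Ψ : (Fin n → ℝ) × ℝ → EuclideanSpace ℝ (Fin (n + 1)) := fun q =>
      b.repr.symm ((MeasurableEquiv.toLp 2 (Fin (n + 1) → ℝ))
        ((MeasurableEquiv.piFinSuccAbove (fun _ : Fin (n + 1) => ℝ) 0).symm (Prod.swap q)))
      with hΨdef
    have hswap : MeasurePreserving (Prod.swap : (Fin n → ℝ) × ℝ → ℝ × (Fin n → ℝ))
        volume volume := by
      rw [Measure.volume_eq_prod, Measure.volume_eq_prod]
      exact Measure.measurePreserving_swap
    have hΨmp : MeasurePreserving Ψ volume volume := by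
      have h1 := b.measurePreserving_repr_symm
      have h2 := (EuclideanSpace.volume_preserving_symm_measurableEquiv_toLp (Fin (n + 1))).symm
      have h3 := (volume_preserving_piFinSuccAbove (fun _ : Fin (n + 1) => ℝ) 0).symm
      exact h1.comp (h2.comp (h3.comp hswap))
    -- the line property
    have hΨ_line : ∀ (w : Fin n → ℝ) (t : ℝ), Ψ (w, t) = Ψ (w, 0) + t • u := by
      intro w t
      apply b.repr.injective
      rw [map_add, LinearIsometryEquiv.map_smul]
      have hbu : b.repr u = EuclideanSpace.single 0 1 := by
        rw [← hb0]; exact b.repr_self 0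
      rw [hΨdef]
      simp only [LinearIsometryEquiv.apply_symm_apply, hbu]
      ext i
      simp only [MeasurableEquiv.piFinSuccAbove_symm_apply, Prod.swap_prod_mk]
      rw [PiLp.add_apply, PiLp.smul_apply]
      rw [MeasurableEquiv.coe_toLp]
      simp only [PiLp.toLp_apply]
      rcases Fin.eq_zero_or_eq_succ i with hi | ⟨j, hj⟩
      · subst hi
        simp [Fin.insertNth_zero', EuclideanSpace.single_apply]
      · subst hj
        simp [Fin.insertNth_zero', EuclideanSpace.single_apply, Fin.succ_ne_zero]
    -- choose the neighborhood
    refine ⟨Z ∩ Metric.ball x δ, ?_, ?_⟩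
    · exact Filter.inter_mem self_mem_nhdsWithin
        (mem_nhdsWithin_of_mem_nhds (Metric.ball_mem_nhds x hδ))
    · have hmeas : MeasurableSet (Z ∩ Metric.ball x δ) :=
        hZmeas.inter Metric.isOpen_ball.measurableSet
      rw [← hΨmp.measure_preimage hmeas.nullMeasurableSet]
      have hSmeas : MeasurableSet (Ψ ⁻¹' (Z ∩ Metric.ball x δ)) :=
        hmeas.preimage hΨmp.measurable
      rw [Measure.volume_eq_prod, Measure.measure_prod_null hSmeas]
      refine Filter.Eventually.of_forall fun w => ?_
      simp only [Pi.zero_apply]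
      show volume (Prod.mk w ⁻¹' (Ψ ⁻¹' (Z ∩ Metric.ball x δ))) = 0
      -- the slice
      have hslice_eq : Prod.mk w ⁻¹' (Ψ ⁻¹' (Z ∩ Metric.ball x δ))
          = {t : ℝ | Ψ (w, t) ∈ Z ∩ Metric.ball x δ} := rfl
      rw [hslice_eq]
      rcases Set.eq_empty_or_nonempty {t : ℝ | Ψ (w, t) ∈ Z ∩ Metric.ball x δ} with he | hne'
      · rw [he]; exact measure_empty
      obtain ⟨t₁, ht₁⟩ := hne'
      simp only [Set.mem_setOf_eq, Set.mem_inter_iff] at ht₁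
      obtain ⟨⟨hz₁U, hz₁0⟩, hz₁ball⟩ := ht₁
      set p := Ψ (w, 0) with hpdef
      have hz₁ : Ψ (w, t₁) = p + t₁ • u := hΨ_line w t₁
      set z₁ := p + t₁ • u with hz₁def
      rw [hz₁] at hz₁U hz₁0 hz₁ball
      have hz₁x : dist z₁ x < δ := Metric.mem_ball.mp hz₁ball
      -- the 1D zero set
      set J : Set ℝ := {t : ℝ | p + t • u ∈ Metric.ball x (3 * ε)} with hJdef
      have hJo : IsOpen J := by
        have hcont : Continuous (fun t : ℝ => p + t • u) :=
          continuous_const.add (continuous_id.smul continuous_const)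
        exact Metric.isOpen_ball.preimage hcont
      have hJconv : Convex ℝ J := by
        have hfun : (fun t : ℝ => p + t • u)
            = ⇑(AffineMap.lineMap p (p + u) : ℝ →ᵃ[ℝ] _) := by
          funext t
          simp only [AffineMap.lineMap_apply, vsub_eq_sub, vadd_eq_add]
          module
        have : J = ⇑(AffineMap.lineMap p (p + u) : ℝ →ᵃ[ℝ] _) ⁻¹' Metric.ball x (3 * ε) := by
          rw [hJdef, ← hfun]; rfl
        rw [this]
        exact (convex_ball x (3 * ε)).affine_preimage _
      have hline_an : AnalyticOnNhd ℝ (fun t : ℝ => p + t • u) J := by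
        have hlin : AnalyticOnNhd ℝ (fun t : ℝ => t • u) J := by
          have : (fun t : ℝ => t • u)
              = ⇑((ContinuousLinearMap.id ℝ ℝ).smulRight u) := by
            funext t; simp
          rw [this]
          exact ContinuousLinearMap.analyticOnNhd _ J
        exact analyticOnNhd_const.add hlin
      have hmaps : Set.MapsTo (fun t : ℝ => p + t • u) J U := fun t ht => hball3 ht
      have hcomp : AnalyticOnNhd ℝ (g ∘ fun t : ℝ => p + t • u) J := hgn.comp hline_an hmaps
      -- witness of nonvanishing on J
      set t₂ := t₁ + c with ht₂def
      have hpt₂ : p + t₂ • u = z₁ + c • u := by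
        rw [ht₂def, add_smul, hz₁def]; abel
      have ht₂J : t₂ ∈ J := by
        simp only [hJdef, Set.mem_setOf_eq, hpt₂, Metric.mem_ball]
        calc dist (z₁ + c • u) x ≤ dist (z₁ + c • u) (x + c • u) + dist (x + c • u) x := by
              exact dist_triangle _ _ _
          _ = dist z₁ x + ‖c • u‖ := by
              simp [dist_eq_norm, add_sub_add_right_eq_sub, add_sub_cancel_left]
          _ < δ + c := by
              have : ‖c • u‖ = c := by rw [norm_smul, hu, mul_one, Real.norm_eq_abs, abs_of_pos hc]
              rw [this]; linarith
          _ < 3 * ε := by linarith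
      have ht₂ne : (g ∘ fun t : ℝ => p + t • u) t₂ ≠ 0 := by
        simp only [Function.comp_apply, hpt₂]
        apply hηball
        rw [← hcu, dist_add_right]
        linarith
      -- conclude by countability
      have hsub : {t : ℝ | Ψ (w, t) ∈ Z ∩ Metric.ball x δ}
          ⊆ {t ∈ J | (g ∘ fun t : ℝ => p + t • u) t = 0} := by
        intro t ht
        simp only [Set.mem_setOf_eq, Set.mem_inter_iff] at ht
        rw [hΨ_line w t] at ht
        obtain ⟨⟨htU, ht0⟩, htball⟩ := ht
        refine ⟨?_, ht0⟩
        simp only [hJdef, Set.mem_setOf_eq, Metric.mem_ball]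
        have := Metric.mem_ball.mp htball
        linarith
      apply measure_mono_null hsub
      exact (zero_set_countable_1d hJo hJconv.isPreconnected hcomp ht₂J ht₂ne).measure_zero _
end

section
/- Let σ be an n×n signature matrix and (c,d) an optimal solution of Pryce's ILP with optimal value δ = Σdⱼ − Σcᵢ. Consider the augmented (n+r)×(n+r) signature matrix σ̄ of the IIR-augmented system, whose entries satisfy: σ̄ᵢⱼ ≤ dⱼ for 1 ≤ i ≤ r, 1 ≤ j ≤ n; σ̄ᵢⱼ = −∞ for 1 ≤ i ≤ r, n+1 ≤ j ≤ n+r; σ̄ᵢⱼ ≤ dⱼ − 1 for r+1 ≤ i ≤ n+r, 1 ≤ j ≤ n; and σ̄ᵢⱼ ≤ 0 for r+1 ≤ i ≤ n+r, n+1 ≤ j ≤ n+r. Then the vector pair c̄ = (0,…,0, 1,…,1) (r zeros then n ones) and d̄ = (d₁,…,dₙ, 1,…,1) (r trailing ones) is feasible for the ILP of σ̄, and hence the optimal value δ(σ̄) ≤ Σⱼ dⱼ − (n − r). -/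
open Finset

theorem iir_augmented_ilp_feasibility {n r : ℕ} (hrn : r ≤ n)
    (σ : Fin n → Fin n → WithBot ℤ) (c d : Fin n → ℤ)
    (hd1 : ∀ j, 1 ≤ d j) (hc : ∀ i, 0 ≤ c i)
    (hfeas : ∀ i j, σ i j ≤ ((d j - c i : ℤ) : WithBot ℤ))
    (σbar : Fin (n + r) → Fin (n + r) → WithBot ℤ)
    (h1 : ∀ (i j : Fin (n + r)) (_ : (i : ℕ) < r) (hj : (j : ℕ) < n),
      σbar i j ≤ ((d ⟨j, hj⟩ : ℤ) : WithBot ℤ))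
    (h2 : ∀ i j : Fin (n + r), (i : ℕ) < r → n ≤ (j : ℕ) → σbar i j = ⊥)
    (h3 : ∀ (i j : Fin (n + r)) (_ : r ≤ (i : ℕ)) (hj : (j : ℕ) < n),
      σbar i j ≤ ((d ⟨j, hj⟩ - 1 : ℤ) : WithBot ℤ))
    (h4 : ∀ i j : Fin (n + r), r ≤ (i : ℕ) → n ≤ (j : ℕ) → σbar i j ≤ ((0 : ℤ) : WithBot ℤ))
    (cbar : Fin (n + r) → ℤ) (hcbar : cbar = fun i : Fin (n + r) => if (i : ℕ) < r then (0 : ℤ) else 1)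
    (dbar : Fin (n + r) → ℤ)
    (hdbar : dbar = fun j : Fin (n + r) => if hj : (j : ℕ) < n then d ⟨j, hj⟩ else (1 : ℤ)) :
    ((∀ i, 0 ≤ cbar i) ∧ ∀ i j, σbar i j ≤ ((dbar j - cbar i : ℤ) : WithBot ℤ)) ∧
    (∑ j, dbar j) - (∑ i, cbar i) = (∑ j, d j) - ((n : ℤ) - (r : ℤ)) ∧
    (∀ v : ℤ, IsLeast {v' : ℤ | ∃ c' d' : Fin (n + r) → ℤ,
        (∀ i, 0 ≤ c' i) ∧ (∀ i j, σbar i j ≤ ((d' j - c' i : ℤ) : WithBot ℤ)) ∧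
        v' = (∑ j, d' j) - (∑ i, c' i)} v →
      v ≤ (∑ j, d j) - ((n : ℤ) - (r : ℤ))) := by
  subst hcbar hdbar
  have hcpos : ∀ i : Fin (n + r), (0:ℤ) ≤ if (i : ℕ) < r then (0 : ℤ) else 1 := by
    intro i; split <;> norm_num
  have hfeas' : ∀ i j : Fin (n + r), σbar i j ≤
      (((if hj : (j : ℕ) < n then d ⟨j, hj⟩ else (1 : ℤ)) -
        (if (i : ℕ) < r then (0 : ℤ) else 1) : ℤ) : WithBot ℤ) := by
    intro i j
    by_cases hi : (i : ℕ) < r <;> by_cases hj : (j : ℕ) < n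
    · simp only [hi, hj, if_pos, dif_pos, sub_zero]
      exact h1 i j hi hj
    · rw [h2 i j hi (le_of_not_gt hj)]; exact bot_le
    · simp only [hi, hj, if_neg, dif_pos, not_false_iff]
      exact h3 i j (le_of_not_gt hi) hj
    · simp only [hi, hj, if_neg, dif_neg, not_false_iff, sub_self]
      exact h4 i j (le_of_not_gt hi) (le_of_not_gt hj)
  have hsumd : (∑ j : Fin (n + r), if hj : (j : ℕ) < n then d ⟨j, hj⟩ else (1 : ℤ))
      = (∑ j, d j) + r := by
    rw [Fin.sum_univ_eq_sum_range (fun k => if hk : k < n then d ⟨k, hk⟩ else (1:ℤ))]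
    rw [Finset.range_eq_Ico, ← Finset.sum_Ico_consecutive _ (Nat.zero_le n) (Nat.le_add_right n r)]
    have e1 : (∑ k ∈ Finset.Ico 0 n, if hk : k < n then d ⟨k, hk⟩ else (1:ℤ)) = ∑ j, d j := by
      rw [← Finset.range_eq_Ico, ← Fin.sum_univ_eq_sum_range (fun k => _)]
      apply Finset.sum_congr rfl
      intro j _
      simp [j.isLt]
    have e2 : (∑ k ∈ Finset.Ico n (n + r), if hk : k < n then d ⟨k, hk⟩ else (1:ℤ)) = r := by
      have h : ∀ k ∈ Finset.Ico n (n + r), (if hk : k < n then d ⟨k, hk⟩ else (1:ℤ)) = 1 := by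
        intro k hk
        rw [dif_neg (Nat.not_lt.mpr (Finset.mem_Ico.mp hk).1)]
      rw [Finset.sum_congr rfl h, Finset.sum_const, Nat.card_Ico]
      simp
    rw [e1, e2]
  have hsumc : (∑ i : Fin (n + r), if (i : ℕ) < r then (0 : ℤ) else 1) = n := by
    rw [Fin.sum_univ_eq_sum_range (fun k => if k < r then (0:ℤ) else 1)]
    rw [Finset.range_eq_Ico, ← Finset.sum_Ico_consecutive _ (Nat.zero_le r)
      (Nat.le_add_left r n)]
    have e1 : (∑ k ∈ Finset.Ico 0 r, if k < r then (0:ℤ) else 1) = 0 := by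
      apply Finset.sum_eq_zero
      intro k hk
      rw [if_pos (Finset.mem_Ico.mp hk).2]
    have e2 : (∑ k ∈ Finset.Ico r (n + r), if k < r then (0:ℤ) else 1) = n := by
      have h : ∀ k ∈ Finset.Ico r (n + r), (if k < r then (0:ℤ) else 1) = 1 := by
        intro k hk
        rw [if_neg (Nat.not_lt.mpr (Finset.mem_Ico.mp hk).1)]
      rw [Finset.sum_congr rfl h, Finset.sum_const, Nat.card_Ico]
      simp [Nat.add_sub_cancel]
    rw [e1, e2, zero_add]
  have hval : (∑ j : Fin (n + r), if hj : (j : ℕ) < n then d ⟨j, hj⟩ else (1 : ℤ))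
      - (∑ i : Fin (n + r), if (i : ℕ) < r then (0 : ℤ) else 1)
      = (∑ j, d j) - ((n : ℤ) - (r : ℤ)) := by
    rw [hsumd, hsumc]; ring
  refine ⟨⟨hcpos, hfeas'⟩, hval, ?_⟩
  intro v hv
  have hmem : (∑ j, d j) - ((n : ℤ) - (r : ℤ)) ∈ {v' : ℤ | ∃ c' d' : Fin (n + r) → ℤ,
      (∀ i, 0 ≤ c' i) ∧ (∀ i j, σbar i j ≤ ((d' j - c' i : ℤ) : WithBot ℤ)) ∧
      v' = (∑ j, d' j) - (∑ i, c' i)} := by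
    exact ⟨_, _, hcpos, hfeas', hval.symm⟩
  exact hv.2 hmem
end
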